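/- If U ∈ F_p^{ℕ×ℕ} is [p,p]-automatic, then there is a constant K such that the number of distinct m×n rectangular subwords occurring in U is at most K·max{m,n}^2 for all m,n ≥ 1. -/

import Mathlib

/-- joint base-`p` digit list of `(x, y)`, length `k`, least significant first. -/
def dig (p k x y : ℕ) : List (ℕ × ℕ) :=
  (List.range k).map fun i => (x / p ^ i % p, y / p ^ i % p)

lemma dig_length (p k x y : ℕ) : (dig p k x y).length = k := by simp [dig]

lemma dig_getD (p : ℕ) {k : ℕ} (x y : ℕ) {i : ℕ} (hi : i < k) :
    (dig p k x y).getD i (0, 0) = (x / p ^ i % p, y / p ^ i % p) := by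
  rw [List.getD_eq_getElem _ _ (by simpa [dig_length] using hi)]
  simp [dig]

lemma dig_mem (p : ℕ) (hp : 0 < p) (k x y : ℕ) : ∀ d ∈ dig p k x y, d.1 < p ∧ d.2 < p := by
  intro d hd
  simp only [dig, List.mem_map, List.mem_range] at hd
  obtain ⟨i, _, rfl⟩ := hd
  exact ⟨Nat.mod_lt _ hp, Nat.mod_lt _ hp⟩

lemma sum_dig (p : ℕ) (hp : 0 < p) (x : ℕ) :
    ∀ k, ∑ i ∈ Finset.range k, x / p ^ i % p * p ^ i = x % p ^ k := by
  intro k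
  induction k with
  | zero => simp [Nat.mod_one]
  | succ k ih =>
    rw [Finset.sum_range_succ, ih]
    have e1 : x = p ^ (k + 1) * (x / p ^ k / p) + (x / p ^ k % p * p ^ k + x % p ^ k) := by
      calc x = p ^ k * (x / p ^ k) + x % p ^ k := (Nat.div_add_mod _ _).symm
      _ = p ^ k * (p * (x / p ^ k / p) + x / p ^ k % p) + x % p ^ k := by
            rw [Nat.div_add_mod (x / p ^ k) p]
      _ = p ^ (k + 1) * (x / p ^ k / p) + (x / p ^ k % p * p ^ k + x % p ^ k) := by ring
    have hlt : x / p ^ k % p * p ^ k + x % p ^ k < p ^ (k + 1) := by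
      have h1 : x / p ^ k % p < p := Nat.mod_lt _ hp
      have h2 : x % p ^ k < p ^ k := Nat.mod_lt _ (pow_pos hp k)
      calc x / p ^ k % p * p ^ k + x % p ^ k < x / p ^ k % p * p ^ k + p ^ k := by omega
      _ = (x / p ^ k % p + 1) * p ^ k := by ring
      _ ≤ p * p ^ k := Nat.mul_le_mul_right _ (by omega)
      _ = p ^ (k + 1) := by ring
    have key : x % p ^ (k + 1) = x / p ^ k % p * p ^ k + x % p ^ k := by
      conv_lhs => rw [e1]
      rw [Nat.mul_add_mod, Nat.mod_eq_of_lt hlt]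
    omega

lemma sum_dig_int (p : ℕ) (hp : 0 < p) {x k : ℕ} (hx : x < p ^ k) :
    ∑ i ∈ Finset.range k, ((x / p ^ i % p : ℕ) : ℤ) * (p : ℤ) ^ i = (x : ℤ) := by
  have h := sum_dig p hp x k
  rw [Nat.mod_eq_of_lt hx] at h
  calc ∑ i ∈ Finset.range k, ((x / p ^ i % p : ℕ) : ℤ) * (p : ℤ) ^ i
      = ((∑ i ∈ Finset.range k, x / p ^ i % p * p ^ i : ℕ) : ℤ) := by push_cast; rfl
  _ = (x : ℤ) := by rw [h]


variable {S : Type}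

/-- Description of an aligned block: either the origin block marker, or the function
taking the state after reading the low digits to the output. -/
def desc (p : ℕ) (δ : S → ℕ × ℕ → S) (ω : S → ZMod p) (A B : ℕ) : (S → ZMod p) ⊕ Unit :=
  if A = 0 ∧ B = 0 then Sum.inr () else
    Sum.inl fun t => ω (List.foldl δ t (dig p (Nat.log p (max A B) + 1) A B))

lemma desc_eq_inl (p : ℕ) (δ : S → ℕ × ℕ → S) (ω : S → ZMod p) (A B : ℕ)
    (h : ¬(A = 0 ∧ B = 0)) :
    desc p δ ω A B
      = Sum.inl fun t => ω (List.foldl δ t (dig p (Nat.log p (max A B) + 1) A B)) :=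
  if_neg h

lemma desc_eq_inr_iff (p : ℕ) (δ : S → ℕ × ℕ → S) (ω : S → ZMod p) (A B : ℕ) :
    desc p δ ω A B = Sum.inr () ↔ (A = 0 ∧ B = 0) := by
  rw [desc]; split_ifs with h <;> simp [h]

lemma block_eval (p : ℕ) (hp : 1 < p) (U : ℕ × ℕ → ZMod p)
    (δ : S → ℕ × ℕ → S) (s0 : S) (ω : S → ZMod p)
    (spec : ∀ (m n : ℕ) (L : List (ℕ × ℕ)),
      (∀ d ∈ L, d.1 < p ∧ d.2 < p) →
      (∀ h : L ≠ [], (L.getLast h).1 ≠ 0 ∨ (L.getLast h).2 ≠ 0) →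
      (m : ℤ) = ∑ i ∈ Finset.range L.length, ((L.getD i (0, 0)).1 : ℤ) * (p : ℤ) ^ i →
      (n : ℤ) = ∑ i ∈ Finset.range L.length, ((L.getD i (0, 0)).2 : ℤ) * (p : ℤ) ^ i →
      ω (L.foldl δ s0) = U (m, n))
    {k A B r s : ℕ} (hr : r < p ^ k) (hs : s < p ^ k) (hAB : ¬(A = 0 ∧ B = 0)) :
    U (A * p ^ k + r, B * p ^ k + s)
      = ω (List.foldl δ (List.foldl δ s0 (dig p k r s))
          (dig p (Nat.log p (max A B) + 1) A B)) := by
  have hp0 : 0 < p := by omega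
  set l := Nat.log p (max A B) with hl
  set L := dig p k r s ++ dig p (l + 1) A B with hL
  have hM : max A B ≠ 0 := by omega
  have h1 : p ^ l ≤ max A B := Nat.pow_log_le_self p hM
  have h2 : max A B < p ^ (l + 1) := Nat.lt_pow_succ_log_self hp _
  have hA : A < p ^ (l + 1) := lt_of_le_of_lt (le_max_left A B) h2
  have hB : B < p ^ (l + 1) := lt_of_le_of_lt (le_max_right A B) h2
  have hlen : L.length = k + (l + 1) := by simp [hL, dig_length]
  have e1 : ∀ i < k, L.getD i (0, 0) = (r / p ^ i % p, s / p ^ i % p) := by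
    intro i hi
    rw [hL, List.getD_append _ _ _ _ (by rw [dig_length]; exact hi)]
    exact dig_getD p r s hi
  have e2 : ∀ j < l + 1, L.getD (k + j) (0, 0) = (A / p ^ j % p, B / p ^ j % p) := by
    intro j hj
    rw [hL, List.getD_append_right _ _ _ _ (by rw [dig_length]; omega)]
    rw [dig_length, Nat.add_sub_cancel_left]
    exact dig_getD p A B hj
  rw [← List.foldl_append]
  refine (spec _ _ L ?_ ?_ ?_ ?_).symm
  · intro d hd
    rcases List.mem_append.1 hd with h | h
    exacts [dig_mem p hp0 _ _ _ d h, dig_mem p hp0 _ _ _ d h]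
  · intro h
    have hgl : L.getD (L.length - 1) (0, 0) = (A / p ^ l % p, B / p ^ l % p) := by
      rw [hlen, show k + (l + 1) - 1 = k + l by omega]
      exact e2 l (by omega)
    rw [List.getLast_eq_getElem, ← List.getD_eq_getElem _ (0,0) (by omega), hgl]
    have hd1 : 1 ≤ max A B / p ^ l := (Nat.one_le_div_iff (pow_pos hp0 l)).2 h1
    have hd2 : max A B / p ^ l < p := by
      rw [Nat.div_lt_iff_lt_mul (pow_pos hp0 l)]
      calc max A B < p ^ (l + 1) := h2
      _ = p * p ^ l := by ring
    rcases max_choice A B with hc | hc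
    · left
      rw [hc] at hd1 hd2
      simpa [Nat.mod_eq_of_lt hd2] using by omega
    · right
      rw [hc] at hd1 hd2
      simpa [Nat.mod_eq_of_lt hd2] using by omega
  · rw [hlen, Finset.sum_range_add]
    have s1 : ∑ i ∈ Finset.range k, ((L.getD i (0, 0)).1 : ℤ) * (p : ℤ) ^ i = (r : ℤ) := by
      rw [Finset.sum_congr rfl fun i hi => by rw [e1 i (Finset.mem_range.1 hi)]]
      exact sum_dig_int p hp0 hr
    have s2 : ∑ j ∈ Finset.range (l + 1), ((L.getD (k + j) (0, 0)).1 : ℤ) * (p : ℤ) ^ (k + j)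
        = (p : ℤ) ^ k * (A : ℤ) := by
      have : ∀ j ∈ Finset.range (l + 1),
          ((L.getD (k + j) (0, 0)).1 : ℤ) * (p : ℤ) ^ (k + j)
            = (p : ℤ) ^ k * (((A / p ^ j % p : ℕ) : ℤ) * (p : ℤ) ^ j) := by
        intro j hj
        rw [e2 j (Finset.mem_range.1 hj), pow_add]; ring
      rw [Finset.sum_congr rfl this, ← Finset.mul_sum, sum_dig_int p hp0 hA]
    rw [s1, s2]
    push_cast
    ring
  · rw [hlen, Finset.sum_range_add]
    have s1 : ∑ i ∈ Finset.range k, ((L.getD i (0, 0)).2 : ℤ) * (p : ℤ) ^ i = (s : ℤ) := by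
      rw [Finset.sum_congr rfl fun i hi => by rw [e1 i (Finset.mem_range.1 hi)]]
      exact sum_dig_int p hp0 hs
    have s2 : ∑ j ∈ Finset.range (l + 1), ((L.getD (k + j) (0, 0)).2 : ℤ) * (p : ℤ) ^ (k + j)
        = (p : ℤ) ^ k * (B : ℤ) := by
      have : ∀ j ∈ Finset.range (l + 1),
          ((L.getD (k + j) (0, 0)).2 : ℤ) * (p : ℤ) ^ (k + j)
            = (p : ℤ) ^ k * (((B / p ^ j % p : ℕ) : ℤ) * (p : ℤ) ^ j) := by
        intro j hj
        rw [e2 j (Finset.mem_range.1 hj), pow_add]; ring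
      rw [Finset.sum_congr rfl this, ← Finset.mul_sum, sum_dig_int p hp0 hB]
    rw [s1, s2]
    push_cast
    ring

/-- Splitting a shifted coordinate into an aligned block plus remainder. -/
lemma split_add (P a i : ℕ) (_hP : 0 < P) :
    a + i = (a / P + (a % P + i) / P) * P + (a % P + i) % P := by
  calc a + i = P * (a / P) + a % P + i := by rw [Nat.div_add_mod]
  _ = P * (a / P) + (P * ((a % P + i) / P) + (a % P + i) % P) := by
      rw [Nat.div_add_mod (a % P + i) P, Nat.add_assoc]
  _ = (a / P + (a % P + i) / P) * P + (a % P + i) % P := by ring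


/-- `U : ℕ × ℕ → F_p` is `[p,p]`-automatic: a DFAO computes `U (m,n)` from the base-`p`
representations of `m` and `n`, padded to equal length (no common leading zero pair) and
read least significant digit first. -/
def IsPPAutomatic (p : ℕ) (U : ℕ × ℕ → ZMod p) : Prop :=
  ∃ (S : Type) (_ : Fintype S) (δ : S → ℕ × ℕ → S) (s0 : S) (ω : S → ZMod p),
    ∀ (m n : ℕ) (L : List (ℕ × ℕ)),
      (∀ d ∈ L, d.1 < p ∧ d.2 < p) →
      (∀ h : L ≠ [], (L.getLast h).1 ≠ 0 ∨ (L.getLast h).2 ≠ 0) →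
      (m : ℤ) = ∑ i ∈ Finset.range L.length, ((L.getD i (0, 0)).1 : ℤ) * (p : ℤ) ^ i →
      (n : ℤ) = ∑ i ∈ Finset.range L.length, ((L.getD i (0, 0)).2 : ℤ) * (p : ℤ) ^ i →
      ω (L.foldl δ s0) = U (m, n)

/-- If `U ∈ F_p^{ℕ×ℕ}` is `[p,p]`-automatic, then there is a constant `K` such that the
number of distinct `m × n` rectangular subwords occurring in `U` is at most
`K · max{m,n}²` for all `m, n ≥ 1`. -/
theorem ppAutomatic_complexity (p : ℕ) (hp : p.Prime) (U : ℕ × ℕ → ZMod p)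
    (hU : IsPPAutomatic p U) :
    ∃ K : ℕ, ∀ m n : ℕ, 1 ≤ m → 1 ≤ n →
      (Set.range (fun ab : ℕ × ℕ => fun ij : Fin m × Fin n =>
        U (ab.1 + ij.1, ab.2 + ij.2))).ncard ≤ K * max m n ^ 2 := by
  classical
  obtain ⟨S, hS, δ, s0, ω, spec⟩ := hU
  haveI := hS
  have hp1 : 1 < p := hp.one_lt
  have hp0 : 0 < p := hp.pos
  haveI : NeZero p := ⟨hp.ne_zero⟩
  haveI : Finite ((S → ZMod p) ⊕ Unit) := by infer_instance
  refine ⟨p ^ 2 * Nat.card ((S → ZMod p) ⊕ Unit) ^ 4, ?_⟩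
  intro m n hm hn
  set M := max m n with hM
  set k := Nat.clog p M with hk
  set P := p ^ k with hP
  have hM1 : 1 ≤ M := le_trans hm (le_max_left m n)
  have hPpos : 0 < P := pow_pos hp0 k
  have hMP : M ≤ P := Nat.le_pow_clog hp1 M
  have hPM : P ≤ p * M := by
    rcases eq_or_lt_of_le hM1 with h | h
    · rw [hP, hk, ← h]
      simpa using hp1.le
    · have hlt := Nat.pow_pred_clog_lt_self hp1 h
      have hk1 : 0 < k := Nat.clog_pos hp1 h
      calc P = p ^ (k - 1 + 1) := by rw [hP]; congr 1; omega
      _ = p * p ^ (k - 1) := pow_succ' p (k - 1)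
      _ ≤ p * M := Nat.mul_le_mul_left p hlt.le
  set BD := (S → ZMod p) ⊕ Unit with hBD
  set D : ℕ → ℕ → BD := fun A B => desc p δ ω A B with hD
  set W : ℕ × ℕ → (Fin m × Fin n → ZMod p) :=
    fun ab => fun ij => U (ab.1 + ij.1, ab.2 + ij.2) with hW
  set f : ℕ × ℕ → Fin P × Fin P × BD × BD × BD × BD := fun ab =>
    (⟨ab.1 % P, Nat.mod_lt _ hPpos⟩, ⟨ab.2 % P, Nat.mod_lt _ hPpos⟩,
     D (ab.1 / P) (ab.2 / P), D (ab.1 / P + 1) (ab.2 / P),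
     D (ab.1 / P) (ab.2 / P + 1), D (ab.1 / P + 1) (ab.2 / P + 1)) with hf
  have hkey : ∀ ab ab' : ℕ × ℕ, f ab = f ab' → W ab = W ab' := by
    rintro ⟨a1, b1⟩ ⟨a2, b2⟩ h
    simp only [hf, Prod.mk.injEq, Fin.mk.injEq] at h
    obtain ⟨ha, hb, h00, h10, h01, h11⟩ := h
    have hDcd : ∀ c ≤ 1, ∀ d ≤ 1,
        D (a1 / P + c) (b1 / P + d) = D (a2 / P + c) (b2 / P + d) := by
      intro c hc d hd
      interval_cases c <;> interval_cases d <;> simpa using by assumption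
    funext ij
    obtain ⟨i, j⟩ := ij
    simp only [hW]
    set ca := (a1 % P + (i : ℕ)) / P with hca
    set cb := (b1 % P + (j : ℕ)) / P with hcb
    set r := (a1 % P + (i : ℕ)) % P with hr
    set sv := (b1 % P + (j : ℕ)) % P with hsv
    have hrP : r < P := Nat.mod_lt _ hPpos
    have hsP : sv < P := Nat.mod_lt _ hPpos
    have hca1 : ca ≤ 1 := by
      have h1 : a1 % P < P := Nat.mod_lt _ hPpos
      have h2 : (i : ℕ) < m := i.isLt
      have : a1 % P + (i : ℕ) < 2 * P := by
        have : m ≤ P := le_trans (le_trans (le_max_left m n) hMP) (le_refl P)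
        omega
      have h3 : (a1 % P + (i : ℕ)) / P < 2 := (Nat.div_lt_iff_lt_mul hPpos).2 (by omega)
      omega
    have hcb1 : cb ≤ 1 := by
      have h1 : b1 % P < P := Nat.mod_lt _ hPpos
      have h2 : (j : ℕ) < n := j.isLt
      have : b1 % P + (j : ℕ) < 2 * P := by
        have : n ≤ P := le_trans (le_trans (le_max_right m n) hMP) (le_refl P)
        omega
      have h3 : (b1 % P + (j : ℕ)) / P < 2 := (Nat.div_lt_iff_lt_mul hPpos).2 (by omega)
      omega
    have eqa1 : a1 + (i : ℕ) = (a1 / P + ca) * P + r := split_add P a1 i hPpos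
    have eqb1 : b1 + (j : ℕ) = (b1 / P + cb) * P + sv := split_add P b1 j hPpos
    have eqa2 : a2 + (i : ℕ) = (a2 / P + ca) * P + r := by
      have := split_add P a2 i hPpos
      rw [← ha] at this
      exact this
    have eqb2 : b2 + (j : ℕ) = (b2 / P + cb) * P + sv := by
      have := split_add P b2 j hPpos
      rw [← hb] at this
      exact this
    have hDeq := hDcd ca hca1 cb hcb1
    rw [eqa1, eqb1, eqa2, eqb2]
    by_cases hz : a1 / P + ca = 0 ∧ b1 / P + cb = 0
    · have hz2 : a2 / P + ca = 0 ∧ b2 / P + cb = 0 := by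
        have h1 : D (a2 / P + ca) (b2 / P + cb) = Sum.inr () := by
          rw [← hDeq, hD]
          exact (desc_eq_inr_iff p δ ω _ _).2 hz
        exact (desc_eq_inr_iff p δ ω _ _).1 h1
      rw [hz.1, hz.2, hz2.1, hz2.2]
    · have hz2 : ¬(a2 / P + ca = 0 ∧ b2 / P + cb = 0) := by
        intro hc
        exact hz ((desc_eq_inr_iff p δ ω _ _).1
          (hDeq.trans ((desc_eq_inr_iff p δ ω _ _).2 hc)))
      rw [hP] at hrP hsP
      rw [hP, block_eval p hp1 U δ s0 ω spec hrP hsP hz,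
        block_eval p hp1 U δ s0 ω spec hrP hsP hz2]
      have hinl : (Sum.inl (fun t => ω (List.foldl δ t
            (dig p (Nat.log p (max (a1 / P + ca) (b1 / P + cb)) + 1)
              (a1 / P + ca) (b1 / P + cb)))) : BD)
          = Sum.inl (fun t => ω (List.foldl δ t
            (dig p (Nat.log p (max (a2 / P + ca) (b2 / P + cb)) + 1)
              (a2 / P + ca) (b2 / P + cb)))) := by
        calc (Sum.inl (fun t => ω (List.foldl δ t
              (dig p (Nat.log p (max (a1 / P + ca) (b1 / P + cb)) + 1)
                (a1 / P + ca) (b1 / P + cb)))) : BD)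
            = D (a1 / P + ca) (b1 / P + cb) := by
              rw [hD]; exact (desc_eq_inl p δ ω _ _ hz).symm
        _ = D (a2 / P + ca) (b2 / P + cb) := hDeq
        _ = Sum.inl (fun t => ω (List.foldl δ t
              (dig p (Nat.log p (max (a2 / P + ca) (b2 / P + cb)) + 1)
                (a2 / P + ca) (b2 / P + cb)))) := by
              rw [hD]; exact desc_eq_inl p δ ω _ _ hz2
      have hfun := Sum.inl.inj hinl
      exact congrFun hfun _
  let G : Fin P × Fin P × BD × BD × BD × BD → (Fin m × Fin n → ZMod p) :=
    fun d => if h : ∃ ab, f ab = d then W h.choose else fun _ => 0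
  have hWG : ∀ ab, W ab = G (f ab) := by
    intro ab
    have hex : ∃ ab', f ab' = f ab := ⟨ab, rfl⟩
    have : G (f ab) = W hex.choose := dif_pos hex
    rw [this]
    exact (hkey _ _ hex.choose_spec).symm
  have hsub : Set.range W ⊆ Set.range G := by
    rintro w ⟨ab, rfl⟩
    exact ⟨f ab, (hWG ab).symm⟩
  have hcard : (Set.range G).ncard ≤ Nat.card (Fin P × Fin P × BD × BD × BD × BD) := by
    have h1 : (Set.range G).ncard ≤ (Set.univ : Set (Fin P × Fin P × BD × BD × BD × BD)).ncard := by
      rw [← Set.image_univ]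
      exact Set.ncard_image_le Set.finite_univ
    simpa [Set.ncard_univ] using h1
  calc (Set.range W).ncard ≤ (Set.range G).ncard :=
        Set.ncard_le_ncard hsub (Set.finite_range G)
  _ ≤ Nat.card (Fin P × Fin P × BD × BD × BD × BD) := hcard
  _ = P * (P * (Nat.card BD * (Nat.card BD * (Nat.card BD * Nat.card BD)))) := by
      simp [Nat.card_prod]
  _ = P ^ 2 * Nat.card BD ^ 4 := by ring
  _ ≤ (p * M) ^ 2 * Nat.card BD ^ 4 := by
      exact Nat.mul_le_mul_right _ (Nat.pow_le_pow_left hPM 2)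
  _ = p ^ 2 * Nat.card BD ^ 4 * M ^ 2 := by ring
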